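/- arXiv:1509.03855 — 2 statements merged into one kernel-verified Lean document; each statement's English description precedes it below -/
import Mathlib

section
/- Let X be a graph and x, y vertices of X. If the girth of X is greater than 2Δ + 4, then any two non-degenerate paths from x to y of length at most Δ + 1 are equal. Here a path of length n is a graph homomorphism φ : L_n → X with φ(0) = x and φ(n) = y, where L_n is the path graph on vertices {0,...,n} with edges between consecutive integers, and φ is non-degenerate if there is no i ∈ {1,...,n−1} with φ(i−1) = φ(i+1). -/
/-- A graph: a symmetric relation on a vertex type (loops allowed). -/
structure SymRelGraph (V : Type*) where
  adj : V → V → Prop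
  symm : ∀ {x y : V}, adj x y → adj y x

variable {V : Type*}

/-- `X` has an embedded cycle of length `n`: an injective graph homomorphism
from the cycle graph `C_n`. -/
def HasCycle (X : SymRelGraph V) (n : ℕ) : Prop :=
  ∃ φ : ZMod n → V, Function.Injective φ ∧ ∀ i, X.adj (φ i) (φ (i + 1))

/-- The girth of `X` is greater than `m`: `X` has no loops and no embedded
cycle of length at most `m`. -/
def GirthGT (X : SymRelGraph V) (m : ℕ) : Prop :=
  (∀ v, ¬ X.adj v v) ∧ ∀ n, 3 ≤ n → n ≤ m → ¬ HasCycle X n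

/-- `φ` restricted to `{0,…,n}` is a walk (a graph homomorphism `L_n → X`). -/
def IsWalk (X : SymRelGraph V) (φ : ℕ → V) (n : ℕ) : Prop :=
  ∀ i < n, X.adj (φ i) (φ (i + 1))

/-- `φ : L_n → X` is non-degenerate: there is no `i ∈ {1,…,n-1}` with
`φ (i-1) = φ (i+1)`. -/
def NonDegenerate (φ : ℕ → V) (n : ℕ) : Prop :=
  ∀ i, 1 ≤ i → i + 1 ≤ n → φ (i - 1) ≠ φ (i + 1)

theorem no_closed (X : SymRelGraph V) (m : ℕ) (hg : GirthGT X m) :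
    ∀ ℓ, 1 ≤ ℓ → ℓ ≤ m → ∀ ψ : ℕ → V, IsWalk X ψ ℓ → NonDegenerate ψ ℓ →
      ψ ℓ = ψ 0 → False := by
  intro ℓ
  induction ℓ using Nat.strong_induction_on with
  | _ ℓ ih =>
    intro h1 hm ψ hw hnd hc
    match ℓ, h1, hm, hw, hnd, hc with
    | 1, _, hm, hw, hnd, hc => exact hg.1 (ψ 0) (by have := hw 0 (by norm_num); rwa [hc] at this)
    | 2, _, hm, hw, hnd, hc => exact hnd 1 le_rfl le_rfl (by simpa using hc.symm)
    | (k+3), _, hm, hw, hnd, hc =>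
      by_cases hinj : ∀ a b, a < b → b ≤ k + 2 → ψ a ≠ ψ b
      · have : NeZero (k+3) := ⟨by omega⟩
        haveI : Fact (1 < k+3) := ⟨by omega⟩
        apply hg.2 (k+3) (by omega) hm
        refine ⟨fun i => ψ i.val, ?_, ?_⟩
        · intro i j hij
          by_contra hne
          rcases lt_or_gt_of_ne (fun h : i.val = j.val => hne (ZMod.val_injective _ h)) with h | h
          · exact hinj i.val j.val h (by have := ZMod.val_lt j; omega) hij
          · exact hinj j.val i.val h (by have := ZMod.val_lt i; omega) hij.symm
        · intro i
          show X.adj (ψ i.val) (ψ (i+1).val)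
          have hv : (i + 1 : ZMod (k+3)).val = (i.val + 1) % (k+3) := by
            rw [ZMod.val_add, ZMod.val_one]
          have hlt := ZMod.val_lt i
          by_cases h : i.val + 1 < k + 3
          · rw [hv, Nat.mod_eq_of_lt h]; exact hw i.val (by omega)
          · have h2 : i.val = k + 2 := by omega
            rw [hv, h2]
            simpa [hc] using hw (k+2) (by omega)
      · push_neg at hinj
        obtain ⟨a, b, hab, hb, he⟩ := hinj
        apply ih (b - a) (by omega) (by omega) (by omega) (fun j => ψ (a + j))
        · intro i hi
          have := hw (a + i) (by omega)
          simpa [Nat.add_assoc] using this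
        · intro i hi1 hi2
          have h := hnd (a + i) (by omega) (by omega)
          have e1 : a + i - 1 = a + (i - 1) := by omega
          have e2 : a + i + 1 = a + (i + 1) := by omega
          rw [e1, e2] at h
          exact h
        · have e : a + (b - a) = b := by omega
          show ψ (a + (b-a)) = ψ (a + 0)
          rw [e, Nat.add_zero]; exact he.symm

theorem aux (X : SymRelGraph V) (Δ : ℕ) (hgirth : GirthGT X (2 * Δ + 4)) :
    ∀ N n₁ n₂ (φ₁ φ₂ : ℕ → V) (x y : V), n₁ + n₂ ≤ N →
      n₁ ≤ Δ + 1 → n₂ ≤ Δ + 1 →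
      IsWalk X φ₁ n₁ → IsWalk X φ₂ n₂ →
      NonDegenerate φ₁ n₁ → NonDegenerate φ₂ n₂ →
      φ₁ 0 = x → φ₂ 0 = x → φ₁ n₁ = y → φ₂ n₂ = y →
      n₁ = n₂ ∧ ∀ i ≤ n₁, φ₁ i = φ₂ i := by
  intro N
  induction N with
  | zero =>
    intro n₁ n₂ φ₁ φ₂ x y hN h1 h2 hw₁ hw₂ hnd₁ hnd₂ h0₁ h0₂ he₁ he₂
    have hn1 : n₁ = 0 := by omega
    have hn2 : n₂ = 0 := by omega
    subst hn1; subst hn2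
    exact ⟨rfl, fun i hi => by
      have : i = 0 := by omega
      subst this; rw [h0₁, h0₂]⟩
  | succ N ihN =>
    intro n₁ n₂ φ₁ φ₂ x y hN h1 h2 hw₁ hw₂ hnd₁ hnd₂ h0₁ h0₂ he₁ he₂
    rcases Nat.eq_zero_or_pos n₁ with hz1 | hp1
    · subst hz1
      have hn2 : n₂ = 0 := by
        by_contra hne
        exact no_closed X (2*Δ+4) hgirth n₂ (by omega) (by omega) φ₂ hw₂ hnd₂
          (by rw [he₂, h0₂, ← h0₁, he₁])
      subst hn2
      exact ⟨rfl, fun i hi => by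
        have : i = 0 := by omega
        subst this; rw [h0₁, h0₂]⟩
    rcases Nat.eq_zero_or_pos n₂ with hz2 | hp2
    · subst hz2
      exfalso
      exact no_closed X (2*Δ+4) hgirth n₁ (by omega) (by omega) φ₁ hw₁ hnd₁
        (by rw [he₁, h0₁, ← h0₂, he₂])
    by_cases hj : φ₁ (n₁ - 1) = φ₂ (n₂ - 1)
    · have key := ihN (n₁ - 1) (n₂ - 1) φ₁ φ₂ x (φ₁ (n₁ - 1)) (by omega) (by omega) (by omega)
        (fun i hi => hw₁ i (by omega)) (fun i hi => hw₂ i (by omega))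
        (fun i hi1 hi2 => hnd₁ i hi1 (by omega)) (fun i hi1 hi2 => hnd₂ i hi1 (by omega))
        h0₁ h0₂ rfl hj.symm
      have hnn : n₁ = n₂ := by omega
      refine ⟨hnn, fun i hi => ?_⟩
      rcases Nat.lt_or_ge i n₁ with h | h
      · exact key.2 i (by omega)
      · have : i = n₁ := by omega
        subst this
        rw [he₁, hnn, he₂]
    · exfalso
      set ℓ := n₁ + n₂ with hℓ
      set ψ : ℕ → V := fun i => if i ≤ n₁ then φ₁ i else φ₂ (ℓ - i) with hψ
      have hpsi1 : ∀ i ≤ n₁, ψ i = φ₁ i := fun i hi => by simp [hψ, hi]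
      have hpsi2 : ∀ i, n₁ ≤ i → ψ i = φ₂ (ℓ - i) := by
        intro i hi
        rcases Nat.eq_or_lt_of_le hi with h | h
        · have e : ℓ - i = n₂ := by omega
          rw [e, he₂, ← he₁, ← h]
          exact hpsi1 n₁ le_rfl
        · simp [hψ, Nat.not_le.mpr h]
      apply no_closed X (2*Δ+4) hgirth ℓ (by omega) (by omega) ψ
      · intro i hi
        rcases Nat.lt_or_ge i n₁ with h | h
        · rw [hpsi1 i (by omega), hpsi1 (i+1) (by omega)]
          exact hw₁ i h
        · rw [hpsi2 i h, hpsi2 (i+1) (by omega)]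
          have e : ℓ - i = (ℓ - (i+1)) + 1 := by omega
          rw [e]
          exact X.symm (hw₂ (ℓ - (i+1)) (by omega))
      · intro i hi1 hi2
        rcases Nat.lt_or_ge i n₁ with h | h
        · rw [hpsi1 (i-1) (by omega), hpsi1 (i+1) (by omega)]
          exact hnd₁ i hi1 (by omega)
        rcases Nat.eq_or_lt_of_le h with h' | h'
        · rw [hpsi1 (i-1) (by omega), hpsi2 (i+1) (by omega)]
          have e1 : i - 1 = n₁ - 1 := by omega
          have e2 : ℓ - (i+1) = n₂ - 1 := by omega
          rw [e1, e2]
          exact hj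
        · rw [hpsi2 (i-1) (by omega), hpsi2 (i+1) (by omega)]
          have e1 : ℓ - (i-1) = (ℓ - i) + 1 := by omega
          have e2 : ℓ - (i+1) = (ℓ - i) - 1 := by omega
          rw [e1, e2]
          exact (hnd₂ (ℓ - i) (by omega) (by omega)).symm
      · rw [hpsi2 ℓ (by omega), hpsi1 0 (by omega)]
        have : ℓ - ℓ = 0 := by omega
        rw [this, h0₂, h0₁]

/-- If the girth of `X` is greater than `2Δ + 4`, then any two non-degenerate
paths from `x` to `y` of length at most `Δ + 1` are equal. -/
theorem stmt_0 (X : SymRelGraph V) (Δ : ℕ) (hΔ : 0 < Δ)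
    (hgirth : GirthGT X (2 * Δ + 4))
    (x y : V) (n₁ n₂ : ℕ) (φ₁ φ₂ : ℕ → V)
    (hn₁ : n₁ ≤ Δ + 1) (hn₂ : n₂ ≤ Δ + 1)
    (hw₁ : IsWalk X φ₁ n₁) (hw₂ : IsWalk X φ₂ n₂)
    (hnd₁ : NonDegenerate φ₁ n₁) (hnd₂ : NonDegenerate φ₂ n₂)
    (h0₁ : φ₁ 0 = x) (h0₂ : φ₂ 0 = x) (he₁ : φ₁ n₁ = y) (he₂ : φ₂ n₂ = y) :
    n₁ = n₂ ∧ ∀ i ≤ n₁, φ₁ i = φ₂ i :=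
  aux X Δ hgirth (n₁ + n₂) n₁ n₂ φ₁ φ₂ x y le_rfl hn₁ hn₂ hw₁ hw₂ hnd₁ hnd₂ h0₁ h0₂ he₁ he₂
end

section
/- Let G be a graph and e = ⟨v,w⟩ an edge of G such that there is no graph homomorphism φ : L_3 → G ∖ e with φ(0) = v and φ(3) = w (where G ∖ e is G with the edge e removed, and L_3 is the path on vertices 0,1,2,3). Then any element (σ, τ) of the box complex B(G) = Hom(K_2, G) with v ∈ σ, w ∈ τ, and σ containing a vertex other than v, satisfies τ = {w}. -/
/-- A graph: a symmetric relation on a vertex type (loops allowed). -/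
structure SymmGraph (V : Type*) where
  adj : V → V → Prop
  symm : ∀ {x y : V}, adj x y → adj y x

variable {V : Type*}

/-- `f` is a graph homomorphism from `G` to `H`. -/
def IsGraphHom {W : Type*} (G : SymmGraph V) (H : SymmGraph W) (f : V → W) : Prop :=
  ∀ {x y : V}, G.adj x y → H.adj (f x) (f y)

/-- The path graph `L₃` on vertices `0,1,2,3`, edges between consecutive
integers. -/
def L3 : SymmGraph (Fin 4) where
  adj i j := (i : ℕ) + 1 = j ∨ (j : ℕ) + 1 = i
  symm h := h.symm

/-- The graph `G ∖ e` obtained from `G` by deleting the edge `e = ⟨v,w⟩`. -/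
def delEdge (G : SymmGraph V) (v w : V) : SymmGraph V where
  adj x y := G.adj x y ∧ ¬ ((x = v ∧ y = w) ∨ (x = w ∧ y = v))
  symm h := ⟨G.symm h.1, fun hc => h.2 (by tauto)⟩

/-- Suppose there is no graph homomorphism `L₃ → G ∖ e` sending `0 ↦ v` and
`3 ↦ w`, where `e = ⟨v,w⟩` is an edge of the (loopless at `v,w`) graph `G`.
Then any element `(σ,τ)` of the box complex `B(G) = Hom(K₂,G)` with `v ∈ σ`,
`w ∈ τ` and `σ` containing a vertex other than `v` satisfies `τ = {w}`. -/
theorem stmt_4 (G : SymmGraph V) (v w : V) (he : G.adj v w)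
    (hlv : ¬ G.adj v v) (hlw : ¬ G.adj w w)
    (hL : ¬ ∃ f : Fin 4 → V, IsGraphHom L3 (delEdge G v w) f ∧ f 0 = v ∧ f 3 = w)
    (σ τ : Set V) (hσ : σ.Nonempty) (hτ : τ.Nonempty)
    (hmh : ∀ a ∈ σ, ∀ b ∈ τ, G.adj a b)
    (hv : v ∈ σ) (hw : w ∈ τ) (x : V) (hx : x ∈ σ) (hxv : x ≠ v) :
    τ = {w} := by
  have hvw : v ≠ w := fun h => hlv (h ▸ he)
  ext y
  simp only [Set.mem_singleton_iff]
  constructor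
  · intro hy
    by_contra hyw
    have hyv : y ≠ v := fun h => hlv (h ▸ hmh v hv y hy)
    exact hL ⟨![v, y, x, w], by
      intro i j hij
      have hvy : G.adj v y := hmh v hv y hy
      have hxy : G.adj x y := hmh x hx y hy
      have hxw : G.adj x w := hmh x hx w hw
      fin_cases i <;> fin_cases j <;>
        first
          | (exfalso; revert hij; simp only [L3]; decide)
          | exact ⟨hvy, by tauto⟩
          | exact ⟨G.symm hvy, by tauto⟩
          | exact ⟨G.symm hxy, by tauto⟩
          | exact ⟨hxy, by tauto⟩
          | exact ⟨hxw, by tauto⟩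
          | exact ⟨G.symm hxw, by tauto⟩, rfl, rfl⟩
  · rintro rfl; exact hw
end
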